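/- Let Γ be an m×m real symmetric positive definite matrix, Ĉ an n×n real symmetric positive semidefinite matrix, H an m×n real matrix, y' ∈ ℝᵐ, F a k×n real matrix, G an l×n real matrix, f' ∈ ℝᵏ and g' ∈ ℝˡ. Suppose the feasible set 𝒮 = {(a, v') ∈ ℝⁿ × ℝⁿ : Ĉa = v', Fv' = f', Gv' ≤ g' componentwise} is nonempty. Then there exists a feasible pair (a*, v'*) ∈ 𝒮 minimizing the objective f(a, v') = ½(y' − Hv')ᵀΓ⁻¹(y' − Hv') + ½⟨a, v'⟩ over 𝒮, and the minimizing v'-component is unique: if (a₁, v₁) and (a₂, v₂) are both minimizers over 𝒮, then v₁ = v₂. -/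

import Mathlib

open Matrix

section Stmt10Aux

variable {N : ℕ}

lemma stmt10_vecMul_herm {A : Matrix (Fin N) (Fin N) ℝ} (hA : A.IsHermitian)
    (x : Fin N → ℝ) : x ᵥ* A = A *ᵥ x := by
  have hAt : Aᵀ = A := by
    rw [← conjTranspose_eq_transpose_of_trivial]; exact hA
  conv_lhs => rw [← hAt]
  rw [vecMul_transpose]

lemma stmt10_symdot {A : Matrix (Fin N) (Fin N) ℝ} (hA : A.IsHermitian)
    (x z : Fin N → ℝ) : x ⬝ᵥ A *ᵥ z = z ⬝ᵥ A *ᵥ x := by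
  rw [dotProduct_mulVec, stmt10_vecMul_herm hA, dotProduct_comm]

lemma stmt10_psd_nonneg {A : Matrix (Fin N) (Fin N) ℝ} (hA : A.PosSemidef)
    (x : Fin N → ℝ) : 0 ≤ x ⬝ᵥ A *ᵥ x := by
  simpa using hA.dotProduct_mulVec_nonneg x

lemma stmt10_cont_dot {X : Type*} [TopologicalSpace X] {f g : X → (Fin N → ℝ)}
    (hf : Continuous f) (hg : Continuous g) : Continuous fun x => f x ⬝ᵥ g x := by
  simp only [dotProduct]
  exact continuous_finset_sum _ fun i _ =>
    ((continuous_apply i).comp hf).mul ((continuous_apply i).comp hg)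

lemma stmt10_cont_mulVec {M : ℕ} (A : Matrix (Fin M) (Fin N) ℝ) :
    Continuous fun v : Fin N → ℝ => A *ᵥ v := by
  have := A.mulVecLin.continuous_of_finiteDimensional
  exact this

lemma stmt10_norm_le_sqrt_dot (x : Fin N → ℝ) : ‖x‖ ≤ Real.sqrt (x ⬝ᵥ x) := by
  rw [pi_norm_le_iff_of_nonneg (Real.sqrt_nonneg _)]
  intro i
  rw [Real.norm_eq_abs, ← Real.sqrt_sq_eq_abs]
  apply Real.sqrt_le_sqrt
  rw [sq]
  exact Finset.single_le_sum (f := fun j => x j * x j)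
    (fun j _ => mul_self_nonneg _) (Finset.mem_univ i)

end Stmt10Aux

theorem stmt_10 {m n k l : ℕ}
    (Γ : Matrix (Fin m) (Fin m) ℝ) (hΓ : Γ.PosDef)
    (C : Matrix (Fin n) (Fin n) ℝ) (hC : C.PosSemidef)
    (H : Matrix (Fin m) (Fin n) ℝ)
    (y' : Fin m → ℝ)
    (F : Matrix (Fin k) (Fin n) ℝ) (G : Matrix (Fin l) (Fin n) ℝ)
    (f' : Fin k → ℝ) (g' : Fin l → ℝ)
    (S : Set ((Fin n → ℝ) × (Fin n → ℝ)))
    (hS : S = {p | C.mulVec p.1 = p.2 ∧ F.mulVec p.2 = f' ∧ G.mulVec p.2 ≤ g'})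
    (hne : S.Nonempty)
    (obj : (Fin n → ℝ) × (Fin n → ℝ) → ℝ)
    (hobj : ∀ p, obj p =
      (1 / 2) * ((y' - H.mulVec p.2) ⬝ᵥ Γ⁻¹.mulVec (y' - H.mulVec p.2)) +
      (1 / 2) * (p.1 ⬝ᵥ p.2)) :
    (∃ p ∈ S, ∀ q ∈ S, obj p ≤ obj q) ∧
    (∀ p ∈ S, ∀ q ∈ S,
      (∀ r ∈ S, obj p ≤ obj r) → (∀ r ∈ S, obj q ≤ obj r) → p.2 = q.2) := by
  have hΓinv : (Γ⁻¹).PosSemidef := hΓ.inv.posSemidef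
  obtain ⟨B, hB, hBB⟩ : ∃ B : Matrix (Fin n) (Fin n) ℝ, B.PosSemidef ∧ B * B = C := by
    open scoped MatrixOrder in
    exact ⟨CFC.sqrt C, (CFC.sqrt_nonneg C).posSemidef, CFC.sqrt_mul_sqrt_self C hC.nonneg⟩
  have hCv : ∀ x : Fin n → ℝ, C *ᵥ x = B *ᵥ (B *ᵥ x) := by
    intro x; rw [mulVec_mulVec, hBB]
  have hdotB : ∀ x : Fin n → ℝ, x ⬝ᵥ C *ᵥ x = (B *ᵥ x) ⬝ᵥ (B *ᵥ x) := by
    intro x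
    rw [hCv, dotProduct_mulVec, stmt10_vecMul_herm hB.1]
  constructor
  · -- existence
    classical
    obtain ⟨p₀, hp₀⟩ := hne
    set rangeB : Submodule ℝ (Fin n → ℝ) := LinearMap.range B.mulVecLin with hrB
    set ψ : (Fin n → ℝ) × (Fin n → ℝ) → ℝ := fun q =>
      (1 / 2) * ((y' - H *ᵥ q.2) ⬝ᵥ Γ⁻¹ *ᵥ (y' - H *ᵥ q.2)) + (1 / 2) * (q.1 ⬝ᵥ q.1) with hψ
    set M : Set ((Fin n → ℝ) × (Fin n → ℝ)) :=
      {q | q.1 ∈ rangeB ∧ B *ᵥ q.1 = q.2 ∧ F *ᵥ q.2 = f' ∧ G *ᵥ q.2 ≤ g'} with hM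
    have StoM : ∀ p ∈ S, ((B *ᵥ p.1, p.2) ∈ M ∧ ψ (B *ᵥ p.1, p.2) = obj p) := by
      intro p hp
      rw [hS] at hp
      obtain ⟨hp1, hp2, hp3⟩ := hp
      constructor
      · refine ⟨⟨p.1, by simp [Matrix.mulVecLin_apply]⟩, ?_, hp2, hp3⟩
        show B *ᵥ (B *ᵥ p.1) = p.2
        rw [← hCv, hp1]
      · rw [hobj p, hψ]
        simp only
        rw [← hdotB, hp1]
    have MtoS : ∀ q ∈ M, ∃ p ∈ S, obj p = ψ q := by
      intro q hq
      obtain ⟨⟨a, ha⟩, hq2, hq3, hq4⟩ := hq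
      have haB : B *ᵥ a = q.1 := by
        rw [← Matrix.mulVecLin_apply]; exact ha
      refine ⟨(a, q.2), ?_, ?_⟩
      · rw [hS]
        refine ⟨?_, hq3, hq4⟩
        show C *ᵥ a = q.2
        rw [hCv, haB]; exact hq2
      · rw [hobj, hψ]
        simp only
        have key : a ⬝ᵥ q.2 = q.1 ⬝ᵥ q.1 := by
          rw [← hq2, ← haB, ← hCv, hdotB]
        rw [key]
    have hy2 : Continuous fun q : (Fin n → ℝ) × (Fin n → ℝ) => y' - H *ᵥ q.2 :=
      continuous_const.sub ((stmt10_cont_mulVec H).comp continuous_snd)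
    have hcontψ : Continuous ψ := by
      rw [hψ]
      exact (continuous_const.mul
          (stmt10_cont_dot hy2 ((stmt10_cont_mulVec Γ⁻¹).comp hy2))).add
        (continuous_const.mul (stmt10_cont_dot continuous_fst continuous_fst))
    have hMclosed : IsClosed M := by
      have h1 : IsClosed {q : (Fin n → ℝ) × (Fin n → ℝ) | q.1 ∈ rangeB} :=
        (Submodule.closed_of_finiteDimensional rangeB).preimage continuous_fst
      have h2 : IsClosed {q : (Fin n → ℝ) × (Fin n → ℝ) | B *ᵥ q.1 = q.2} :=
        isClosed_eq ((stmt10_cont_mulVec B).comp continuous_fst) continuous_snd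
      have h3 : IsClosed {q : (Fin n → ℝ) × (Fin n → ℝ) | F *ᵥ q.2 = f'} :=
        isClosed_eq ((stmt10_cont_mulVec F).comp continuous_snd) continuous_const
      have h4 : IsClosed {q : (Fin n → ℝ) × (Fin n → ℝ) | G *ᵥ q.2 ≤ g'} := by
        have he : {q : (Fin n → ℝ) × (Fin n → ℝ) | G *ᵥ q.2 ≤ g'} =
            ⋂ i, {q | (G *ᵥ q.2) i ≤ g' i} := by
          ext q; simp [Pi.le_def]
        rw [he]
        exact isClosed_iInter fun i => isClosed_le
          ((continuous_apply i).comp ((stmt10_cont_mulVec G).comp continuous_snd))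
          continuous_const
      have hMeq : M = {q : (Fin n → ℝ) × (Fin n → ℝ) | q.1 ∈ rangeB} ∩
          ({q | B *ᵥ q.1 = q.2} ∩ ({q | F *ᵥ q.2 = f'} ∩ {q | G *ᵥ q.2 ≤ g'})) := by
        rfl
      rw [hMeq]
      exact h1.inter (h2.inter (h3.inter h4))
    obtain ⟨hq₀M, hq₀ψ⟩ := StoM p₀ hp₀
    set q₀ : (Fin n → ℝ) × (Fin n → ℝ) := (B *ᵥ p₀.1, p₀.2) with hq₀
    set c₀ := ψ q₀ with hc₀def
    set K := M ∩ {q | ψ q ≤ c₀} with hK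
    have hKclosed : IsClosed K := hMclosed.inter (isClosed_le hcontψ continuous_const)
    set R := Real.sqrt (2 * c₀) with hR
    set Bc := LinearMap.toContinuousLinearMap B.mulVecLin with hBc
    have hKbdd : K ⊆ Metric.closedBall 0 R ×ˢ Metric.closedBall 0 (‖Bc‖ * R) := by
      rintro q ⟨hqM, hqlev⟩
      have h0 := stmt10_psd_nonneg hΓinv (y' - H *ᵥ q.2)
      have hqlev' : (1 / 2 : ℝ) * ((y' - H *ᵥ q.2) ⬝ᵥ Γ⁻¹ *ᵥ (y' - H *ᵥ q.2)) +
          (1 / 2) * (q.1 ⬝ᵥ q.1) ≤ c₀ := hqlev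
      have hq11 : q.1 ⬝ᵥ q.1 ≤ 2 * c₀ := by
        clear_value c₀
        linarith
      have hn1 : ‖q.1‖ ≤ R := le_trans (stmt10_norm_le_sqrt_dot q.1) (Real.sqrt_le_sqrt hq11)
      refine Set.mem_prod.mpr ⟨?_, ?_⟩
      · rw [mem_closedBall_zero_iff]; exact hn1
      · rw [mem_closedBall_zero_iff]
        have hq2 : q.2 = Bc q.1 := by
          rw [← hqM.2.1]
          simp [hBc, Matrix.mulVecLin_apply]
        rw [hq2]
        calc ‖Bc q.1‖ ≤ ‖Bc‖ * ‖q.1‖ := Bc.le_opNorm q.1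
          _ ≤ ‖Bc‖ * R := mul_le_mul_of_nonneg_left hn1 (norm_nonneg _)
    have hKcompact : IsCompact K :=
      Metric.isCompact_of_isClosed_isBounded hKclosed
        ((Metric.isBounded_closedBall.prod Metric.isBounded_closedBall).subset hKbdd)
    have hKne : K.Nonempty := ⟨q₀, hq₀M, hc₀def.ge⟩
    obtain ⟨qs, hqsK, hqsmin⟩ := hKcompact.exists_isMinOn hKne hcontψ.continuousOn
    obtain ⟨ps, hpsS, hpsobj⟩ := MtoS qs hqsK.1
    refine ⟨ps, hpsS, ?_⟩
    intro q hq
    obtain ⟨hqM', hqval⟩ := StoM q hq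
    by_cases hcase : ψ (B *ᵥ q.1, q.2) ≤ c₀
    · have hmem : (B *ᵥ q.1, q.2) ∈ K := ⟨hqM', hcase⟩
      have := isMinOn_iff.mp hqsmin _ hmem
      rw [hpsobj, ← hqval]
      exact this
    · push_neg at hcase
      have h1 : ψ qs ≤ c₀ := isMinOn_iff.mp hqsmin q₀ ⟨hq₀M, hc₀def.ge⟩
      rw [hpsobj, ← hqval]
      linarith
  · -- uniqueness
    rintro p hp q hq hmp hmq
    rw [hS] at hp hq
    obtain ⟨hp1, hp2, hp3⟩ := hp
    obtain ⟨hq1, hq2, hq3⟩ := hq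
    have hpq : obj p = obj q := le_antisymm (hmp q (by rw [hS]; exact ⟨hq1, hq2, hq3⟩))
      (hmq p (by rw [hS]; exact ⟨hp1, hp2, hp3⟩))
    set r : (Fin n → ℝ) × (Fin n → ℝ) :=
      ((1/2 : ℝ) • (p.1 + q.1), (1/2 : ℝ) • (p.2 + q.2)) with hrdef
    have hr : r ∈ S := by
      rw [hS]
      refine ⟨?_, ?_, ?_⟩
      · show C *ᵥ ((1/2 : ℝ) • (p.1 + q.1)) = (1/2 : ℝ) • (p.2 + q.2)
        rw [mulVec_smul, mulVec_add, hp1, hq1]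
      · show F *ᵥ ((1/2 : ℝ) • (p.2 + q.2)) = f'
        rw [mulVec_smul, mulVec_add, hp2, hq2]
        funext i; simp; ring
      · show G *ᵥ ((1/2 : ℝ) • (p.2 + q.2)) ≤ g'
        rw [mulVec_smul, mulVec_add]
        intro i
        have h1 := hp3 i
        have h2 := hq3 i
        simp only [Pi.smul_apply, Pi.add_apply, smul_eq_mul]
        linarith
    have key : obj p ≤ obj r := hmp r hr
    -- algebra
    set u1 := y' - H *ᵥ p.2 with hu1
    set u2 := y' - H *ᵥ q.2 with hu2
    have hmidu : y' - H *ᵥ r.2 = (1/2 : ℝ) • (u1 + u2) := by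
      show y' - H *ᵥ ((1/2 : ℝ) • (p.2 + q.2)) = _
      rw [mulVec_smul, mulVec_add, hu1, hu2]
      funext i; simp; ring
    set d := (p.1 - q.1) ⬝ᵥ C *ᵥ (p.1 - q.1) with hd
    set e := (u1 - u2) ⬝ᵥ Γ⁻¹ *ᵥ (u1 - u2) with he
    have hd0 : 0 ≤ d := stmt10_psd_nonneg hC _
    have he0 : 0 ≤ e := stmt10_psd_nonneg hΓinv _
    -- expansion of the Γ⁻¹ quadratic at the midpoint
    have hGq : ((1/2 : ℝ) • (u1 + u2)) ⬝ᵥ Γ⁻¹ *ᵥ ((1/2 : ℝ) • (u1 + u2)) =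
        (1/2) * (u1 ⬝ᵥ Γ⁻¹ *ᵥ u1) + (1/2) * (u2 ⬝ᵥ Γ⁻¹ *ᵥ u2) - (1/4) * e := by
      rw [he]
      simp only [mulVec_smul, mulVec_add, mulVec_sub, dotProduct_smul, smul_dotProduct,
        dotProduct_add, add_dotProduct, dotProduct_sub, sub_dotProduct, smul_eq_mul]
      ring
    -- expansion of the inner product term
    have hsym : q.1 ⬝ᵥ C *ᵥ p.1 = p.1 ⬝ᵥ C *ᵥ q.1 := stmt10_symdot hC.1 q.1 p.1
    have hip : r.1 ⬝ᵥ r.2 =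
        (1/2) * (p.1 ⬝ᵥ p.2) + (1/2) * (q.1 ⬝ᵥ q.2) - (1/4) * d := by
      show ((1/2 : ℝ) • (p.1 + q.1)) ⬝ᵥ ((1/2 : ℝ) • (p.2 + q.2)) = _
      rw [hd, ← hp1, ← hq1]
      simp only [mulVec_sub, dotProduct_smul, smul_dotProduct, dotProduct_add,
        add_dotProduct, dotProduct_sub, sub_dotProduct, smul_eq_mul]
      linarith [hsym]
    have hobjr : obj r = (1/2) * ((1/2) * (u1 ⬝ᵥ Γ⁻¹ *ᵥ u1) + (1/2) * (u2 ⬝ᵥ Γ⁻¹ *ᵥ u2)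
        - (1/4) * e) + (1/2) * ((1/2) * (p.1 ⬝ᵥ p.2) + (1/2) * (q.1 ⬝ᵥ q.2) - (1/4) * d) := by
      rw [hobj r, hmidu, hGq, hip]
    have hobjp : obj p = (1/2) * (u1 ⬝ᵥ Γ⁻¹ *ᵥ u1) + (1/2) * (p.1 ⬝ᵥ p.2) := by
      rw [hobj p]
    have hobjq : obj q = (1/2) * (u2 ⬝ᵥ Γ⁻¹ *ᵥ u2) + (1/2) * (q.1 ⬝ᵥ q.2) := by
      rw [hobj q]
    have hdz : d = 0 := by nlinarith [key, hpq, hd0, he0, hobjr, hobjp, hobjq]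
    have hCz : C *ᵥ (p.1 - q.1) = 0 := by
      refine (hC.dotProduct_mulVec_zero_iff (p.1 - q.1)).mp ?_
      rw [show star (p.1 - q.1) = p.1 - q.1 from star_trivial _]
      exact hdz
    have : p.2 - q.2 = 0 := by
      rw [← hp1, ← hq1, ← mulVec_sub] at *
      exact hCz
    exact sub_eq_zero.mp this
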